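/- Let φ = ⋀_{i=1}^k C_i be a CNF formula and let f, t be fresh variables. Define Φ = {C_i ∨ (f → t) : i = 1,...,k} and α = (f → t). Then (Φ, α) is an argument (Φ is consistent, Φ ⊨ α, and no proper subset of Φ entails α) if and only if φ is unsatisfiable but removing any single clause C_i from φ makes the remaining conjunction satisfiable. -/

import Mathlib

inductive PropForm (α : Type) where
  | var : α → PropForm α
  | tru : PropForm α
  | fls : PropForm α
  | not : PropForm α → PropForm α
  | and : PropForm α → PropForm α → PropForm α
  | or : PropForm α → PropForm α → PropForm α
  deriving DecidableEq

def PropForm.eval {α : Type} (v : α → Bool) : PropForm α → Bool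
  | .var a => v a
  | .tru => true
  | .fls => false
  | .not φ => !(PropForm.eval v φ)
  | .and φ ψ => PropForm.eval v φ && PropForm.eval v ψ
  | .or φ ψ => PropForm.eval v φ || PropForm.eval v ψ

/-- `v` satisfies every formula in `Φ`. -/
def Models {α : Type} (Φ : Set (PropForm α)) (v : α → Bool) : Prop :=
  ∀ φ ∈ Φ, PropForm.eval v φ = true

/-- `Φ` entails `ψ`. -/
def Entails {α : Type} (Φ : Set (PropForm α)) (ψ : PropForm α) : Prop :=
  ∀ v : α → Bool, Models Φ v → PropForm.eval v ψ = true

/-- `Φ` is consistent. -/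
def Consistent {α : Type} (Φ : Set (PropForm α)) : Prop :=
  ∃ v : α → Bool, Models Φ v

/-- Conjunction of a list of formulae. -/
def bigAnd {α : Type} (L : List (PropForm α)) : PropForm α :=
  L.foldr PropForm.and PropForm.tru

/-- The propositional formula corresponding to a clause given as a list of literals
(variable index together with polarity). -/
def clauseForm (L : List (ℕ × Bool)) : PropForm ℕ :=
  L.foldr (fun l acc => .or (if l.2 then .var l.1 else .not (.var l.1)) acc) .fls

/-- `(Φ, α)` is an argument: `Φ` is consistent, `Φ ⊨ α`, and no proper subset of `Φ`
entails `α`. -/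
def IsArgument (Φ : Finset (PropForm ℕ)) (α : PropForm ℕ) : Prop :=
  Consistent (↑Φ : Set (PropForm ℕ)) ∧ Entails (↑Φ : Set (PropForm ℕ)) α ∧
    ∀ Φ' ⊂ Φ, ¬ Entails ((Φ' : Finset (PropForm ℕ)) : Set (PropForm ℕ)) α

lemma clauseForm_eval (v : ℕ → Bool) (L : List (ℕ × Bool)) :
    PropForm.eval v (clauseForm L) = true ↔ ∃ l ∈ L, v l.1 = l.2 := by
  induction L with
  | nil => simp [clauseForm, PropForm.eval]
  | cons a L ih =>
    show PropForm.eval v (.or (if a.2 then .var a.1 else .not (.var a.1)) (clauseForm L)) = true ↔ _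
    rcases a with ⟨n, b⟩
    cases b <;> simp [PropForm.eval, ih]

lemma clauseForm_inj : Function.Injective clauseForm := by
  intro L1
  induction L1 with
  | nil =>
    intro L2 h
    cases L2 with
    | nil => rfl
    | cons b L2 => exact absurd h (by simp [clauseForm])
  | cons a L1 ih =>
    intro L2 h
    cases L2 with
    | nil => exact absurd h (by simp [clauseForm])
    | cons b L2 =>
      have h' : PropForm.or (if a.2 then .var a.1 else .not (.var a.1)) (clauseForm L1)
          = PropForm.or (if b.2 then .var b.1 else .not (.var b.1)) (clauseForm L2) := h
      injection h' with h1 h2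
      have hL := ih h2
      rcases a with ⟨n, c⟩; rcases b with ⟨m, d⟩
      subst hL
      cases c <;> cases d <;>
        first
          | (injection h1 with h1; injection h1 with h1; simp_all)
          | (injection h1 with h1; simp_all)
          | (exfalso; simp at h1)

/-- With `Φ = {Cᵢ ∨ (f → t)}` and `α = (f → t)`, the pair `(Φ, α)` is an argument iff
`φ = ⋀ᵢ Cᵢ` is unsatisfiable but removing any single clause makes it satisfiable. -/
theorem stmt15 (k : ℕ) (C : Fin k → List (ℕ × Bool)) (f t : ℕ)
    (hft : f ≠ t) (hfresh : ∀ i, ∀ l ∈ C i, l.1 ≠ f ∧ l.1 ≠ t)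
    (hinj : Function.Injective C) :
    IsArgument
      (Finset.image
        (fun i => PropForm.or (clauseForm (C i)) (.or (.not (.var f)) (.var t)))
        (Finset.univ : Finset (Fin k)))
      (PropForm.or (.not (.var f)) (.var t))
    ↔ ((¬ ∃ σ : ℕ → Bool, ∀ i, ∃ l ∈ C i, σ l.1 = l.2) ∧
        ∀ i : Fin k, ∃ σ : ℕ → Bool, ∀ j, j ≠ i → ∃ l ∈ C j, σ l.1 = l.2) := by
  set A : PropForm ℕ := PropForm.or (.not (.var f)) (.var t) with hA
  set F : Fin k → PropForm ℕ := fun i => PropForm.or (clauseForm (C i)) A with hF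
  have hFinj : Function.Injective F := by
    intro i j hij
    injection hij with h1 _
    exact hinj (clauseForm_inj h1)
  -- evaluation of F i
  have hevalF : ∀ (v : ℕ → Bool) (i : Fin k),
      PropForm.eval v (F i) = (PropForm.eval v (clauseForm (C i)) || PropForm.eval v A) := by
    intro v i; rfl
  have hevalA : ∀ v : ℕ → Bool, PropForm.eval v A = (!v f || v t) := by intro v; rfl
  constructor
  · rintro ⟨_, hent, hmin⟩
    constructor
    · rintro ⟨σ, hσ⟩
      set σ' : ℕ → Bool := fun n => if n = f then true else if n = t then false else σ n with hσ'
      have hmod : Models (↑(Finset.image F Finset.univ) : Set (PropForm ℕ)) σ' := by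
        intro x hx
        simp only [Finset.coe_image, Finset.coe_univ, Set.image_univ, Set.mem_range] at hx
        obtain ⟨i, rfl⟩ := hx
        rw [hevalF]
        obtain ⟨l, hl, hval⟩ := hσ i
        have hlf := hfresh i l hl
        have : σ' l.1 = l.2 := by simp [hσ', hlf.1, hlf.2, hval]
        have : PropForm.eval σ' (clauseForm (C i)) = true :=
          (clauseForm_eval σ' (C i)).2 ⟨l, hl, this⟩
        simp [this]
      have := hent σ' hmod
      rw [hevalA] at this
      simp [hσ', hft, Ne.symm hft] at this
    · intro i
      have hxmem : F i ∈ Finset.image F Finset.univ := Finset.mem_image_of_mem F (Finset.mem_univ i)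
      have hss : (Finset.image F Finset.univ).erase (F i) ⊂ Finset.image F Finset.univ :=
        Finset.erase_ssubset hxmem
      have hne := hmin _ hss
      rw [Entails] at hne
      push_neg at hne
      obtain ⟨v, hv, hvα⟩ := hne
      refine ⟨v, fun j hj => ?_⟩
      have hFj : F j ∈ (Finset.image F Finset.univ).erase (F i) := by
        refine Finset.mem_erase.2 ⟨fun h => hj (hFinj h), Finset.mem_image_of_mem F (Finset.mem_univ j)⟩
      have := hv (F j) (by exact_mod_cast hFj)
      rw [hevalF] at this
      have hAf : PropForm.eval v A = false := by
        cases h' : PropForm.eval v A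
        · rfl
        · exact absurd h' hvα
      rw [hAf, Bool.or_false] at this
      exact (clauseForm_eval v (C j)).1 this
  · rintro ⟨hunsat, hdel⟩
    refine ⟨⟨fun _ => true, ?_⟩, ?_, ?_⟩
    · intro x hx
      simp only [Finset.coe_image, Finset.coe_univ, Set.image_univ, Set.mem_range] at hx
      obtain ⟨i, rfl⟩ := hx
      rw [hevalF, hevalA]; simp
    · intro v hv
      by_contra hvα
      have hAf : PropForm.eval v A = false := by
        cases h' : PropForm.eval v A
        · rfl
        · exact absurd h' hvα
      refine hunsat ⟨v, fun i => ?_⟩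
      have := hv (F i) (by
        simp only [Finset.coe_image, Finset.coe_univ, Set.image_univ, Set.mem_range]
        exact ⟨i, rfl⟩)
      rw [hevalF, hAf, Bool.or_false] at this
      exact (clauseForm_eval v (C i)).1 this
    · intro Φ' hΦ' hent
      obtain ⟨x, hxΦ, hxΦ'⟩ := Finset.exists_of_ssubset hΦ'
      obtain ⟨i, _, rfl⟩ := Finset.mem_image.1 hxΦ
      obtain ⟨σ, hσ⟩ := hdel i
      set v : ℕ → Bool := fun n => if n = f then true else if n = t then false else σ n with hv
      have hAf : PropForm.eval v A = false := by
        rw [hevalA]; simp [hv, hft, Ne.symm hft]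
      have hmod : Models (↑Φ' : Set (PropForm ℕ)) v := by
        intro y hy
        have hyΦ : y ∈ Finset.image F Finset.univ := hΦ'.1 (by exact_mod_cast hy)
        obtain ⟨j, _, rfl⟩ := Finset.mem_image.1 hyΦ
        have hji : j ≠ i := by
          rintro rfl
          exact hxΦ' (by exact_mod_cast hy)
        obtain ⟨l, hl, hval⟩ := hσ j hji
        have hlf := hfresh j l hl
        have hvl : v l.1 = l.2 := by simp [hv, hlf.1, hlf.2, hval]
        have : PropForm.eval v (clauseForm (C j)) = true :=
          (clauseForm_eval v (C j)).2 ⟨l, hl, hvl⟩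
        rw [hevalF, this]; rfl
      have := hent v hmod
      rw [hAf] at this
      exact absurd this (by simp)
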